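/- Let L be a locally convex topological vector space with dual L', and let f : L → ℝ ∪ {±∞} be quasiconvex and lower semicontinuous. Then for every X ∈ L, f(X) = sup over X' ∈ L' of R(X'(X), X'), where R(t, X') := inf { f(ξ) | ξ ∈ L, X'(ξ) ≥ t }. -/

import Mathlib

open Filter Set

/-- **Penot–Volle dual representation of quasiconvex lsc functions.**
Let `L` be a locally convex topological vector space with dual `L'` and
`f : L → EReal` quasiconvex and lower semicontinuous.  Then
`f X = ⨆ X' ∈ L', R (X' X) X'` where `R t X' = ⨅ {f ξ | X' ξ ≥ t}`. -/
theorem quasiconvex_dual_representation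
    {L : Type*} [AddCommGroup L] [Module ℝ L] [TopologicalSpace L]
    [IsTopologicalAddGroup L] [ContinuousSMul ℝ L] [LocallyConvexSpace ℝ L]
    (f : L → EReal)
    (hqc : ∀ c : ℝ, Convex ℝ {x : L | f x ≤ (c : EReal)})
    (hlsc : ∀ c : ℝ, IsClosed {x : L | f x ≤ (c : EReal)})
    (X : L) :
    f X = ⨆ X' : L →L[ℝ] ℝ, ⨅ ξ ∈ {ξ : L | X' X ≤ X' ξ}, f ξ := by
  refine le_antisymm ?_ (iSup_le fun X' => (iInf₂_le X (le_refl (X' X))))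
  by_contra h
  push_neg at h
  obtain ⟨c, hc1, hc2⟩ := EReal.exists_between_coe_real h
  have hX : X ∉ {x : L | f x ≤ (c : EReal)} := fun hx => absurd hc2 (not_lt.2 hx)
  obtain ⟨X', u, hu, hux⟩ :=
    geometric_hahn_banach_closed_point (hqc c) (hlsc c) hX
  have key : (c : EReal) ≤ ⨅ ξ ∈ {ξ : L | X' X ≤ X' ξ}, f ξ := by
    refine le_iInf₂ fun ξ hξ => ?_
    by_contra hfc
    push_neg at hfc
    exact absurd (hu ξ hfc.le) (not_lt.2 (hux.le.trans hξ))
  exact absurd (key.trans (le_iSup (fun X' : L →L[ℝ] ℝ => ⨅ ξ ∈ {ξ : L | X' X ≤ X' ξ}, f ξ) X')) (not_le.2 hc1)
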